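/- With c = E_{x∼P*}[Δ_x^w·P₀^(w)(x)/(P*)^(w)(x) − Δ_x·P₀(x)/P*(x)], if for all x ∈ X* and all y' ∈ Y the weights satisfy w(x,y') ≤ (Δ_x·E_{P₀}[w] / (Δ_x^w·E_{P*}[w])) · w(x,y*), then c ≤ 0, and hence the success of a Bayes optimal classifier on the weighted mixture satisfies S(α) ≥ 1 − ((1−α_eff)/α_eff)·Δ·ξ. -/

import Mathlib

open Finset

/-- The `w`-weighted version of a distribution `Q`: `Q^(w)(z) = w(z) Q(z) / E_Q[w]`. -/
noncomputable def wdist {Z : Type*} [Fintype Z] (Q w : Z → ℝ) : Z → ℝ :=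
  fun z => w z * Q z / (∑ z', w z' * Q z')

set_option maxHeartbeats 1600000

/-- if the weights satisfy
`w(x,y') ≤ (Δ_x E_{P₀}[w] / (Δ_x^w E_{P*}[w])) w(x,y*)` on the signal set, then the
corrective term `c` is nonpositive and the weighted success bound
`S(α) ≥ 1 - ((1-α_eff)/α_eff) Δ ξ` holds. -/
theorem stmt10 {X Y : Type*} [Fintype X] [Fintype Y] [DecidableEq X] [DecidableEq Y]
    [Nonempty Y]
    (P0 Pstar : X × Y → ℝ) (w : X × Y → ℝ) (α αeff c : ℝ) (ystar : Y) (f : X → Y)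
    (Xstar : Finset X) (hXne : Xstar.Nonempty)
    (hP0 : ∀ z, 0 ≤ P0 z) (hP0sum : ∑ z, P0 z = 1)
    (hPstar : ∀ z, 0 ≤ Pstar z) (hPstarsum : ∑ z, Pstar z = 1)
    (hw : ∀ z, 0 < w z) (hα : 0 < α) (hα1 : α < 1)
    (hdet : ∀ x y, y ≠ ystar → Pstar (x, y) = 0)
    (hsupp : ∀ x, x ∈ Xstar ↔ (∑ y, Pstar (x, y)) ≠ 0)
    (hαeff : αeff = α * (∑ z, w z * Pstar z)
        / (∑ z, w z * (α * Pstar z + (1 - α) * P0 z)))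
    -- f is Bayes optimal on the weighted mixture (P_α)^(w):
    (hBayes : ∀ x y, wdist (fun z => α * Pstar z + (1 - α) * P0 z) w (x, y)
        ≤ wdist (fun z => α * Pstar z + (1 - α) * P0 z) w (x, f x))
    (Δx Δxw : X → ℝ)
    (hΔx : ∀ x, Δx x = Finset.univ.sup' Finset.univ_nonempty (fun y : Y =>
        P0 (x, y) / (∑ y', P0 (x, y')) - P0 (x, ystar) / (∑ y', P0 (x, y'))))
    (hΔxw : ∀ x, Δxw x = Finset.univ.sup' Finset.univ_nonempty (fun y : Y =>
        wdist P0 w (x, y) / (∑ y', wdist P0 w (x, y'))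
          - wdist P0 w (x, ystar) / (∑ y', wdist P0 w (x, y'))))
    (hc : c = ∑ x, (∑ y, Pstar (x, y)) *
        (Δxw x * (∑ y, wdist P0 w (x, y)) / (∑ y, wdist Pstar w (x, y))
          - Δx x * (∑ y, P0 (x, y)) / (∑ y, Pstar (x, y))))
    -- the weight condition:
    (hwcond : ∀ x ∈ Xstar, ∀ y : Y,
        w (x, y) ≤ (Δx x * (∑ z, w z * P0 z)) / (Δxw x * (∑ z, w z * Pstar z))
          * w (x, ystar)) :
    c ≤ 0 ∧
    (∑ x, (∑ y, Pstar (x, y)) * (if f x = ystar then 1 else 0))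
      ≥ 1 - ((1 - αeff) / αeff) * (Xstar.sup' hXne Δx)
          * (∑ x ∈ Xstar, ∑ y, P0 (x, y)) := by

  classical
  -- abbreviations
  have hE0pos : 0 < ∑ z, w z * P0 z := by
    have hz : ∃ z, 0 < P0 z := by
      by_contra h
      push_neg at h
      have h0 : ∑ z, P0 z = 0 :=
        Finset.sum_eq_zero fun z _ => le_antisymm (h z) (hP0 z)
      rw [h0] at hP0sum; norm_num at hP0sum
    obtain ⟨z0, hz0⟩ := hz
    exact Finset.sum_pos' (fun z _ => mul_nonneg (hw z).le (hP0 z))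
      ⟨z0, Finset.mem_univ z0, mul_pos (hw z0) hz0⟩
  have hEspos : 0 < ∑ z, w z * Pstar z := by
    have hz : ∃ z, 0 < Pstar z := by
      by_contra h
      push_neg at h
      have h0 : ∑ z, Pstar z = 0 :=
        Finset.sum_eq_zero fun z _ => le_antisymm (h z) (hPstar z)
      rw [h0] at hPstarsum; norm_num at hPstarsum
    obtain ⟨z0, hz0⟩ := hz
    exact Finset.sum_pos' (fun z _ => mul_nonneg (hw z).le (hPstar z))
      ⟨z0, Finset.mem_univ z0, mul_pos (hw z0) hz0⟩
  set E0 : ℝ := ∑ z, w z * P0 z with hE0def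
  set Es : ℝ := ∑ z, w z * Pstar z with hEsdef
  have h1α : (0:ℝ) ≤ 1 - α := by linarith
  -- row sums of Pstar
  have hπeq : ∀ x : X, (∑ y, Pstar (x, y)) = Pstar (x, ystar) := by
    intro x
    exact Fintype.sum_eq_single ystar (fun y hy => hdet x y hy)
  have hπnn : ∀ x : X, 0 ≤ Pstar (x, ystar) := fun x => hPstar _
  have hπpos : ∀ x ∈ Xstar, 0 < Pstar (x, ystar) := by
    intro x hx
    have h := (hsupp x).mp hx
    rw [hπeq x] at h
    exact lt_of_le_of_ne (hπnn x) (Ne.symm h)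
  have hπ0 : ∀ x : X, x ∉ Xstar → (∑ y, Pstar (x, y)) = 0 := by
    intro x hx
    by_contra h
    exact hx ((hsupp x).mpr h)
  -- weighted row sums
  have hsum1 : ∀ x : X, (∑ y, wdist P0 w (x, y)) = (∑ y, w (x, y) * P0 (x, y)) / E0 := by
    intro x
    simp only [wdist]
    rw [← Finset.sum_div]
  have hsum2 : ∀ x : X, (∑ y, wdist Pstar w (x, y))
      = w (x, ystar) * Pstar (x, ystar) / Es := by
    intro x
    simp only [wdist]
    rw [← Finset.sum_div]
    congr 1
    exact Fintype.sum_eq_single ystar (fun y hy => by rw [hdet x y hy, mul_zero])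
  have hSnn : ∀ x : X, 0 ≤ ∑ y, w (x, y) * P0 (x, y) :=
    fun x => Finset.sum_nonneg fun y _ => mul_nonneg (hw _).le (hP0 _)
  have hP0xnn : ∀ x : X, 0 ≤ ∑ y, P0 (x, y) :=
    fun x => Finset.sum_nonneg fun y _ => hP0 _
  -- nonnegativity of the gaps
  have hΔxwnn : ∀ x : X, 0 ≤ Δxw x := by
    intro x
    rw [hΔxw x]
    have h := Finset.le_sup' (fun y : Y =>
        wdist P0 w (x, y) / (∑ y', wdist P0 w (x, y'))
          - wdist P0 w (x, ystar) / (∑ y', wdist P0 w (x, y'))) (Finset.mem_univ ystar)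
    simpa only [sub_self] using h
  have hΔxnn : ∀ x : X, 0 ≤ Δx x := by
    intro x
    rw [hΔx x]
    have h := Finset.le_sup' (fun y : Y =>
        P0 (x, y) / (∑ y', P0 (x, y')) - P0 (x, ystar) / (∑ y', P0 (x, y')))
        (Finset.mem_univ ystar)
    simpa only [sub_self] using h
  -- consequences of the weight condition on Xstar
  have hcoef : ∀ x ∈ Xstar, 1 ≤ Δx x * E0 / (Δxw x * Es) := by
    intro x hx
    have h := hwcond x hx ystar
    have hws := hw (x, ystar)
    nlinarith [h, hws]
  have hΔxwpos : ∀ x ∈ Xstar, 0 < Δxw x := by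
    intro x hx
    rcases lt_or_eq_of_le (hΔxwnn x) with h | h
    · exact h
    · exfalso
      have h1 := hcoef x hx
      rw [← h, zero_mul, div_zero] at h1
      linarith
  -- the key inequality from the weight condition
  have key : ∀ x ∈ Xstar,
      (∑ y, w (x, y) * P0 (x, y)) * (Δxw x * Es)
        ≤ Δx x * E0 * (w (x, ystar) * (∑ y, P0 (x, y))) := by
    intro x hx
    have hpos : 0 < Δxw x * Es := mul_pos (hΔxwpos x hx) hEspos
    have h1 : (∑ y, w (x, y) * P0 (x, y))
        ≤ (Δx x * E0 / (Δxw x * Es) * w (x, ystar)) * (∑ y, P0 (x, y)) := by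
      rw [Finset.mul_sum]
      exact Finset.sum_le_sum fun y _ =>
        mul_le_mul_of_nonneg_right (hwcond x hx y) (hP0 _)
    have h2 := mul_le_mul_of_nonneg_right h1 hpos.le
    have h3 : Δx x * E0 / (Δxw x * Es) * (Δxw x * Es) = Δx x * E0 :=
      div_mul_cancel₀ _ hpos.ne'
    calc (∑ y, w (x, y) * P0 (x, y)) * (Δxw x * Es)
        ≤ Δx x * E0 / (Δxw x * Es) * w (x, ystar) * (∑ y, P0 (x, y)) * (Δxw x * Es) := h2
      _ = Δx x * E0 / (Δxw x * Es) * (Δxw x * Es) * (w (x, ystar) * (∑ y, P0 (x, y))) := by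
          ring
      _ = Δx x * E0 * (w (x, ystar) * (∑ y, P0 (x, y))) := by rw [h3]
  -- Part 1 : c ≤ 0
  have hcle : c ≤ 0 := by
    rw [hc]
    apply Finset.sum_nonpos
    intro x _
    by_cases hx : x ∈ Xstar
    · apply mul_nonpos_of_nonneg_of_nonpos
      · rw [hπeq x]; exact hπnn x
      · rw [sub_nonpos, hsum1 x, hsum2 x, hπeq x]
        have hp := hπpos x hx
        have hws := hw (x, ystar)
        have hd : 0 < w (x, ystar) * Pstar (x, ystar) / Es :=
          div_pos (mul_pos hws hp) hEspos
        have hrw : Δxw x * ((∑ y, w (x, y) * P0 (x, y)) / E0)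
            / (w (x, ystar) * Pstar (x, ystar) / Es)
            = (∑ y, w (x, y) * P0 (x, y)) * (Δxw x * Es)
              / (E0 * (w (x, ystar) * Pstar (x, ystar))) := by
          field_simp
        rw [hrw, div_le_div_iff₀ (by positivity) hp]
        calc (∑ y, w (x, y) * P0 (x, y)) * (Δxw x * Es) * Pstar (x, ystar)
            ≤ (Δx x * E0 * (w (x, ystar) * (∑ y, P0 (x, y)))) * Pstar (x, ystar) :=
              mul_le_mul_of_nonneg_right (key x hx) hp.le
          _ = Δx x * (∑ y, P0 (x, y)) * (E0 * (w (x, ystar) * Pstar (x, ystar))) := by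
              ring
    · rw [hπ0 x hx, zero_mul]
  refine ⟨hcle, ?_⟩
  -- Part 2 : the success bound
  have hEα : (∑ z, w z * (α * Pstar z + (1 - α) * P0 z)) = α * Es + (1 - α) * E0 := by
    rw [hEsdef, hE0def, Finset.mul_sum, Finset.mul_sum, ← Finset.sum_add_distrib]
    exact Finset.sum_congr rfl fun z _ => by ring
  have hEαpos : 0 < α * Es + (1 - α) * E0 :=
    add_pos (mul_pos hα hEspos) (mul_pos (by linarith) hE0pos)
  have hK : (1 - αeff) / αeff = (1 - α) * E0 / (α * Es) := by
    rw [hαeff, hEα]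
    rw [div_eq_div_iff (by positivity) (by positivity)]
    field_simp
    ring
  -- per-x bound for misclassified x in Xstar
  have hmain : ∀ x ∈ Xstar, f x ≠ ystar →
      Pstar (x, ystar) * (α * Es)
        ≤ (1 - α) * E0 * (Δx x * (∑ y, P0 (x, y))) := by
    intro x hx hfx
    have hws := hw (x, ystar)
    have hwf := hw (x, f x)
    -- Bayes optimality
    have hb := hBayes x ystar
    simp only [wdist] at hb
    have hb' : w (x, ystar) * (α * Pstar (x, ystar) + (1 - α) * P0 (x, ystar))
        ≤ w (x, f x) * (α * Pstar (x, f x) + (1 - α) * P0 (x, f x)) := by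
      have hpos : 0 < ∑ z', w z' * (α * Pstar z' + (1 - α) * P0 z') := by
        rw [hEα]; exact hEαpos
      exact (div_le_div_iff_of_pos_right hpos).mp hb
    rw [hdet x (f x) hfx] at hb'
    -- bound the weighted gap by Δxw
    have hW : w (x, f x) * P0 (x, f x) - w (x, ystar) * P0 (x, ystar)
        ≤ Δxw x * (∑ y, w (x, y) * P0 (x, y)) := by
      rcases lt_or_eq_of_le (hSnn x) with hS | hS
      · have hle : wdist P0 w (x, f x) / (∑ y', wdist P0 w (x, y'))
            - wdist P0 w (x, ystar) / (∑ y', wdist P0 w (x, y')) ≤ Δxw x := by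
          rw [hΔxw x]
          exact Finset.le_sup' (fun y : Y =>
            wdist P0 w (x, y) / (∑ y', wdist P0 w (x, y'))
              - wdist P0 w (x, ystar) / (∑ y', wdist P0 w (x, y')))
            (Finset.mem_univ (f x))
        rw [hsum1 x] at hle
        simp only [wdist] at hle
        rw [← hE0def] at hle
        have hgen : ∀ a : ℝ, a / E0 / ((∑ y, w (x, y) * P0 (x, y)) / E0)
            = a / (∑ y, w (x, y) * P0 (x, y)) := by
          intro a
          rw [div_div_div_cancel_right₀ hE0pos.ne']
        rw [hgen, hgen, div_sub_div_same] at hle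
        exact (div_le_iff₀ hS).mp hle
      · have hall := (Finset.sum_eq_zero_iff_of_nonneg
          (fun y (_ : y ∈ Finset.univ) => mul_nonneg (hw (x, y)).le (hP0 (x, y)))).mp hS.symm
        rw [hall (f x) (Finset.mem_univ _), hall ystar (Finset.mem_univ _), ← hS]
        simp
      -- combine
    have h3 : α * (w (x, ystar) * Pstar (x, ystar))
        ≤ (1 - α) * (Δxw x * (∑ y, w (x, y) * P0 (x, y))) := by
      have h4 := mul_le_mul_of_nonneg_left hW h1α
      nlinarith [hb', h4]
    have h5 := mul_le_mul_of_nonneg_right h3 hEspos.le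
    have h6 := mul_le_mul_of_nonneg_left (key x hx) h1α
    have h7 : w (x, ystar) * (Pstar (x, ystar) * (α * Es))
        ≤ w (x, ystar) * ((1 - α) * E0 * (Δx x * (∑ y, P0 (x, y)))) := by
      nlinarith [h5, h6]
    exact le_of_mul_le_mul_left h7 hws
  -- assemble
  obtain ⟨x0, hx0⟩ := id hXne
  have hΔnn : 0 ≤ Xstar.sup' hXne Δx :=
    le_trans (hΔxnn x0) (Finset.le_sup' Δx hx0)
  have hKpos : (0:ℝ) < (1 - α) * E0 / (α * Es) :=
    div_pos (mul_pos (by linarith) hE0pos) (mul_pos hα hEspos)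
  have hsum_ps : (∑ x, ∑ y, Pstar (x, y)) = 1 := by
    rw [← Fintype.sum_prod_type]; exact hPstarsum
  have hbound : ∑ x, (∑ y, Pstar (x, y)) * (1 - if f x = ystar then (1:ℝ) else 0)
      ≤ (1 - α) * E0 / (α * Es) * Xstar.sup' hXne Δx * (∑ x ∈ Xstar, ∑ y, P0 (x, y)) := by
    calc ∑ x, (∑ y, Pstar (x, y)) * (1 - if f x = ystar then (1:ℝ) else 0)
        ≤ ∑ x, (if x ∈ Xstar then
            (1 - α) * E0 / (α * Es) * Xstar.sup' hXne Δx * (∑ y, P0 (x, y)) else 0) := by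
          apply Finset.sum_le_sum
          intro x _
          by_cases hx : x ∈ Xstar
          · simp only [hx, if_true]
            by_cases hfx : f x = ystar
            · simp only [hfx, if_true]
              have : (0:ℝ) ≤ (1 - α) * E0 / (α * Es) * Xstar.sup' hXne Δx
                  * (∑ y, P0 (x, y)) :=
                mul_nonneg (mul_nonneg hKpos.le hΔnn) (hP0xnn x)
              simpa using this
            · simp only [hfx, if_false]
              rw [hπeq x]
              have h1 := hmain x hx hfx
              have h2 : Δx x ≤ Xstar.sup' hXne Δx := Finset.le_sup' Δx hx
              have h3 := mul_le_mul_of_nonneg_right h2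
                (mul_nonneg (mul_nonneg h1α hE0pos.le) (hP0xnn x))
              rw [show (1 - α) * E0 / (α * Es) * Xstar.sup' hXne Δx * (∑ y, P0 (x, y))
                  = ((1 - α) * E0 * (Xstar.sup' hXne Δx * (∑ y, P0 (x, y)))) / (α * Es)
                from by ring]
              rw [show Pstar (x, ystar) * (1 - 0) = Pstar (x, ystar) from by ring]
              rw [le_div_iff₀ (mul_pos hα hEspos)]
              nlinarith [h1, h3]
          · simp only [hx, if_false]
            rw [hπ0 x hx, zero_mul]
      _ = ∑ x ∈ Xstar,
            (1 - α) * E0 / (α * Es) * Xstar.sup' hXne Δx * (∑ y, P0 (x, y)) := by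
          rw [Finset.sum_ite_mem, Finset.univ_inter]
      _ = (1 - α) * E0 / (α * Es) * Xstar.sup' hXne Δx
            * (∑ x ∈ Xstar, ∑ y, P0 (x, y)) :=
          (Finset.mul_sum _ _ _).symm
  have hexpand : ∑ x, (∑ y, Pstar (x, y)) * (1 - if f x = ystar then (1:ℝ) else 0)
      = (∑ x, ∑ y, Pstar (x, y))
        - ∑ x, (∑ y, Pstar (x, y)) * (if f x = ystar then (1:ℝ) else 0) := by
    rw [← Finset.sum_sub_distrib]
    exact Finset.sum_congr rfl fun x _ => by ring
  rw [ge_iff_le, hK]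
  rw [hexpand, hsum_ps] at hbound
  linarith
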